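/- Let V be a real topological vector space, ω a nondegenerate alternating bilinear form on V, and D : V → V a linear map with ω(Dv,w) = −ω(v,Dw) for all v,w ∈ V, and set Q(v,w) := ω(Dv,w). Let α be a linear functional on V, x ∈ V, z, t*, z*, t ∈ ℝ with z*·t > 0, and let U be a neighborhood of 0 in V such that the functions f_{x′}(v) := z*z + α(x′) − z*·ω(v,x′) + t·t* + t·α(Dv) + (t·z*/2)·ω(Dv,v), for x′ ∈ x + U, are uniformly bounded from below on V (there is C with f_{x′}(v) ≥ C for all x′ ∈ x + U, v ∈ V). Then there exist a neighborhood U₀ of 0 in V and M ≥ 0 with sup{ ω(y,v) : Q(v,v) ≤ 1 } ≤ M for all y ∈ U₀; in particular, for every y ∈ V the functional v ↦ ω(y,v) is bounded on {v : Q(v,v) ≤ 1}, and also sup{ α(Dv) : Q(v,v) ≤ 1 } < ∞. -/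

import Mathlib

/-- In the setting of Lemma 2.3(ii): with `Q(v,w) := ω(Dv,w)`, if the quadratic
functions `f_{x'}(v) = z*z + α(x') - z*·ω(v,x') + t·t* + t·α(Dv) + (t·z*/2)·ω(Dv,v)`, for
`x' ∈ x + U`, are uniformly bounded from below, then the functionals `i_y ω = ω(y,·)` are
uniformly `Q`-bounded for `y` in some neighborhood of `0`; in particular every `i_y ω` is
bounded on the `Q`-unit ball, and so is `D*α = α ∘ D`. -/
theorem iomega_uniformly_Q_bounded
    {V : Type*} [AddCommGroup V] [Module ℝ V] [TopologicalSpace V]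
    [IsTopologicalAddGroup V] [ContinuousSMul ℝ V]
    (ω : V →ₗ[ℝ] V →ₗ[ℝ] ℝ) (halt : ∀ v : V, ω v v = 0)
    (hnd : ∀ v : V, (∀ w : V, ω v w = 0) → v = 0)
    (D : V →ₗ[ℝ] V) (hskew : ∀ v w : V, ω (D v) w = -ω v (D w))
    (α : V →ₗ[ℝ] ℝ) (x : V) (z tstar zstar t : ℝ) (hzt : zstar * t > 0)
    (U : Set V) (hU : U ∈ nhds (0 : V)) (C : ℝ)
    (hbdd : ∀ u ∈ U, ∀ v : V,
      C ≤ zstar * z + α (x + u) - zstar * ω v (x + u) + t * tstar + t * α (D v)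
        + (t * zstar / 2) * ω (D v) v) :
    (∃ U₀ ∈ nhds (0 : V), ∃ M : ℝ, 0 ≤ M ∧
        ∀ y ∈ U₀, ∀ v : V, ω (D v) v ≤ 1 → ω y v ≤ M) ∧
    (∀ y : V, ∃ My : ℝ, ∀ v : V, ω (D v) v ≤ 1 → ω y v ≤ My) ∧
    (∃ Ma : ℝ, ∀ v : V, ω (D v) v ≤ 1 → α (D v) ≤ Ma) := by
  have htz : (0:ℝ) < t * zstar := by nlinarith
  have hzs : zstar ≠ 0 := by intro h; rw [h] at hzt; simp at hzt
  have ht : t ≠ 0 := by intro h; rw [h] at htz; simp at htz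
  have h0U : (0:V) ∈ U := mem_of_mem_nhds hU
  -- skew symmetry
  have hsk : ∀ a b : V, ω a b = - ω b a := by
    intro a b
    have h := halt (a + b)
    simp only [map_add, LinearMap.add_apply, halt] at h
    linarith
  -- the quadratic (discriminant) bound
  have key : ∀ u ∈ U, ∀ v : V,
      (t * α (D v) - zstar * ω v (x + u))^2 ≤
        4 * ((t * zstar / 2) * ω (D v) v) * (zstar * z + α (x + u) + t * tstar - C) := by
    intro u hu v
    have h : ∀ s : ℝ, 0 ≤ ((t * zstar / 2) * ω (D v) v) * (s * s)
        + (t * α (D v) - zstar * ω v (x + u)) * s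
        + (zstar * z + α (x + u) + t * tstar - C) := by
      intro s
      have h2 := hbdd u hu (s • v)
      simp only [map_smul, LinearMap.smul_apply, smul_eq_mul] at h2
      nlinarith [h2]
    have h3 := discrim_le_zero h
    rw [discrim] at h3
    linarith
  -- nonnegativity of the constant term
  have cnn : ∀ u ∈ U, 0 ≤ zstar * z + α (x + u) + t * tstar - C := by
    intro u hu
    have h := hbdd u hu 0
    simp only [map_zero, LinearMap.zero_apply, mul_zero, zero_mul] at h
    linarith
  -- bound on the unit ball
  have bnd : ∀ u ∈ U, ∀ v : V, ω (D v) v ≤ 1 →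
      (t * α (D v) - zstar * ω v (x + u))^2 ≤
        2 * t * zstar * (zstar * z + α (x + u) + t * tstar - C) := by
    intro u hu v hv
    have h1 := key u hu v
    have h2 := cnn u hu
    nlinarith [mul_nonneg (mul_nonneg htz.le h2) (sub_nonneg.mpr hv)]
  set c0 : ℝ := 2 * t * zstar * (zstar * z + α x + t * tstar - C) with hc0
  have hc0' : ∀ v : V, ω (D v) v ≤ 1 → (t * α (D v) - zstar * ω v x)^2 ≤ c0 := by
    intro v hv
    have := bnd 0 h0U v hv
    simpa using this
  have c0nn : 0 ≤ c0 := by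
    have := cnn 0 h0U
    simp only [add_zero] at this
    nlinarith
  -- core two-sided bound
  have core : ∀ u : V, u ∈ U → -u ∈ U → ∀ v : V, ω (D v) v ≤ 1 →
      (zstar * ω v u)^2 ≤ 4 * c0 := by
    intro u hu hnu v hv
    have hP0 := hc0' v hv
    have hPu := bnd u hu v hv
    have hPn := bnd (-u) hnu v hv
    simp only [map_add, map_neg] at hPu hPn
    -- P u = P0 - zstar * ω v u ; P (-u) = P0 + zstar * ω v u
    rcases le_total 0 (2 * t * zstar * α u) with hd | hd
    · -- use -u : constant term c0 - 2tz*α u ≤ c0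
      nlinarith [sq_nonneg (t * α (D v) - zstar * ω v x + zstar * ω v u),
        sq_nonneg ((t * α (D v) - zstar * ω v x) - (t * α (D v) - zstar * ω v x + zstar * ω v u))]
    · nlinarith [sq_nonneg (t * α (D v) - zstar * ω v x - zstar * ω v u),
        sq_nonneg ((t * α (D v) - zstar * ω v x) - (t * α (D v) - zstar * ω v x - zstar * ω v u))]
  set M : ℝ := 2 * Real.sqrt c0 / |zstar| with hM
  have hMnn : 0 ≤ M := by positivity
  have absbd : ∀ u : V, u ∈ U → -u ∈ U → ∀ v : V, ω (D v) v ≤ 1 → |ω v u| ≤ M := by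
    intro u hu hnu v hv
    have h := core u hu hnu v hv
    have h1 : |zstar * ω v u| ≤ 2 * Real.sqrt c0 := by
      calc |zstar * ω v u| ≤ Real.sqrt (4 * c0) := by
            rw [← Real.sqrt_sq_eq_abs]; exact Real.sqrt_le_sqrt h
        _ = 2 * Real.sqrt c0 := by
            rw [show (4:ℝ) * c0 = 2^2 * c0 by norm_num, Real.sqrt_mul (by positivity),
              Real.sqrt_sq (by norm_num)]
    rw [abs_mul] at h1
    rw [hM, le_div_iff₀ (abs_pos.mpr hzs)]
    calc |ω v u| * |zstar| = |zstar| * |ω v u| := by ring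
      _ ≤ 2 * Real.sqrt c0 := h1
  set U₀ : Set V := U ∩ (fun u : V => -u) ⁻¹' U with hU₀
  have hU₀mem : U₀ ∈ nhds (0 : V) := by
    refine Filter.inter_mem hU ?_
    have : Continuous fun u : V => -u := continuous_neg
    have := this.continuousAt (x := (0:V))
    exact this.preimage_mem_nhds (by simpa using hU)
  refine ⟨⟨U₀, hU₀mem, M, hMnn, ?_⟩, ?_, ?_⟩
  · intro y hy v hv
    have h := absbd y hy.1 hy.2 v hv
    have := hsk y v
    rw [this]
    calc -ω v y ≤ |ω v y| := neg_le_abs _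
      _ ≤ M := h
  · intro y
    -- absorb y into U₀
    have hcont : Continuous fun r : ℝ => r • y := continuous_id.smul continuous_const
    have hpre : {r : ℝ | r • y ∈ U₀} ∈ nhds (0:ℝ) := by
      have := hcont.continuousAt (x := (0:ℝ))
      have h2 := this.preimage_mem_nhds (by simpa using hU₀mem)
      exact h2
    obtain ⟨ε, hε, hball⟩ := Metric.mem_nhds_iff.mp hpre
    have hmem : (ε/2) • y ∈ U₀ := hball (by simp only [Metric.mem_ball, Real.dist_eq, sub_zero]; rw [abs_of_pos (by linarith)]; linarith)
    refine ⟨2 / ε * M, ?_⟩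
    intro v hv
    have h := absbd _ hmem.1 hmem.2 v hv
    have heq : ω v ((ε/2) • y) = (ε/2) * ω v y := by simp
    rw [heq, abs_mul, abs_of_pos (by linarith : (0:ℝ) < ε/2)] at h
    have h2 : |ω v y| ≤ 2/ε * M := by
      rw [div_mul_eq_mul_div, le_div_iff₀ hε]
      calc |ω v y| * ε = ε/2 * |ω v y| * 2 := by ring
        _ ≤ M * 2 := by nlinarith [abs_nonneg (ω v y)]
        _ = 2 * M := by ring
    calc ω y v = -ω v y := hsk y v
      _ ≤ |ω v y| := neg_le_abs _
      _ ≤ 2/ε * M := h2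
  · -- α (D v) bound
    -- |ω v x| bound via absorption
    have hcont : Continuous fun r : ℝ => r • x := continuous_id.smul continuous_const
    have hpre : {r : ℝ | r • x ∈ U₀} ∈ nhds (0:ℝ) := by
      have := hcont.continuousAt (x := (0:ℝ))
      have h2 := this.preimage_mem_nhds (by simpa using hU₀mem)
      exact h2
    obtain ⟨ε, hε, hball⟩ := Metric.mem_nhds_iff.mp hpre
    have hmem : (ε/2) • x ∈ U₀ := hball (by simp only [Metric.mem_ball, Real.dist_eq, sub_zero]; rw [abs_of_pos (by linarith)]; linarith)
    refine ⟨(Real.sqrt c0 + |zstar| * (2/ε * M)) / |t|, ?_⟩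
    intro v hv
    have hx : |ω v x| ≤ 2/ε * M := by
      have h := absbd _ hmem.1 hmem.2 v hv
      have heq : ω v ((ε/2) • x) = (ε/2) * ω v x := by simp
      rw [heq, abs_mul, abs_of_pos (by linarith : (0:ℝ) < ε/2)] at h
      rw [div_mul_eq_mul_div, le_div_iff₀ hε]
      nlinarith [abs_nonneg (ω v x)]
    have hP0 : |t * α (D v) - zstar * ω v x| ≤ Real.sqrt c0 := by
      rw [← Real.sqrt_sq_eq_abs]
      exact Real.sqrt_le_sqrt (hc0' v hv)
    have h1 : |t * α (D v)| ≤ Real.sqrt c0 + |zstar| * (2/ε * M) := by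
      calc |t * α (D v)| = |(t * α (D v) - zstar * ω v x) + zstar * ω v x| := by rw [sub_add_cancel]
        _ ≤ |t * α (D v) - zstar * ω v x| + |zstar * ω v x| := abs_add_le _ _
        _ ≤ Real.sqrt c0 + |zstar| * (2/ε * M) := by
            rw [abs_mul]
            exact add_le_add hP0 (mul_le_mul_of_nonneg_left hx (abs_nonneg _))
    calc α (D v) ≤ |α (D v)| := le_abs_self _
      _ = |t * α (D v)| / |t| := by rw [abs_mul]; field_simp
      _ ≤ (Real.sqrt c0 + |zstar| * (2/ε * M)) / |t| :=
          (div_le_div_iff_of_pos_right (abs_pos.mpr ht)).mpr h1
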